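/- Let d ≥ 2, let 1 ≤ γ_1 ≤ … ≤ γ_{d-1} ≤ β be positive integers, and let p, n be positive integers with gcd(p,n) = 1 and n odd. Then ∏_{k=1}^{βn-1} ( d − e^{2πi p k/(βn)} − ∑_{m=1}^{d-1} e^{2πi (γ_m n + p) k/(βn)} ) = n d^{βn−1} · ( 1 − δ_{β even} · (−1)^p d^{−n} (1 + ∑_{m=1}^{d-1} (−1)^{γ_m})^n ) · ∏_{k=1}^{⌈β/2⌉−1} ( 1 − 2·sgn(d − η_k/2)·|1 − μ_k/d|^n cos( 2πpk/β + n·arctan( (∑_{m=1}^{d-1} sin(2πγ_m k/β)) / (d − η_k/2) ) ) + |1 − μ_k/d|^{2n} ), where sgn(0) is set equal to 1 and when d − η_k/2 = 0 the arctan term is interpreted as its limit sgn(∑_{m=1}^{d-1} sin(2πγ_m k/β))·π/2. -/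

import Mathlib

open Finset Real

/-- `μ_k = d − 1 − ∑_{m=1}^{d-1} e^{2πiγ_m k/β}`, the nonzero Laplacian eigenvalues of the
directed circulant graph on `β` vertices with generators `γ_1, …, γ_{d-1}`. -/
noncomputable def dirEig (d β : ℕ) (γ : ℕ → ℕ) (k : ℕ) : ℂ :=
  (d : ℂ) - 1 - ∑ m ∈ Finset.Icc 1 (d - 1), Complex.exp (2 * Real.pi * Complex.I * (γ m) * k / β)

/-- `η_k = 2(d−1) − 2∑_{m=1}^{d-1} cos(2πγ_m k/β)`, the nonzero Laplacian eigenvalues of the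
undirected circulant graph on `β` vertices with generators `γ_1, …, γ_{d-1}`. -/
noncomputable def undirEig (d β : ℕ) (γ : ℕ → ℕ) (k : ℕ) : ℝ :=
  2 * ((d : ℝ) - 1) - 2 * ∑ m ∈ Finset.Icc 1 (d - 1), Real.cos (2 * Real.pi * (γ m) * k / β)

/-- The phase `arctan((∑_{m=1}^{d-1} sin(2πγ_m k/β))/(d − η_k/2))`, interpreted, when
`d − η_k/2 = 0`, as its limit `sgn(∑_{m=1}^{d-1} sin(2πγ_m k/β))·π/2`. -/
noncomputable def eigPhase (d β : ℕ) (γ : ℕ → ℕ) (k : ℕ) : ℝ :=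
  if (d : ℝ) - undirEig d β γ k / 2 = 0 then
    Real.sign (∑ m ∈ Finset.Icc 1 (d - 1), Real.sin (2 * Real.pi * (γ m) * k / β)) * Real.pi / 2
  else
    Real.arctan ((∑ m ∈ Finset.Icc 1 (d - 1), Real.sin (2 * Real.pi * (γ m) * k / β))
      / ((d : ℝ) - undirEig d β γ k / 2))

/-- The sign function with the convention `sgn(0) = 1`. -/
noncomputable def sgnOne (x : ℝ) : ℝ := if x < 0 then -1 else 1

open Polynomial in
lemma prod_x_sub_mul {n : ℕ} {ζ : ℂ} (hn : 0 < n) (hζ : IsPrimitiveRoot ζ n) (x a : ℂ) :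
    ∏ t ∈ Finset.range n, (x - a * ζ ^ t) = x ^ n - a ^ n := by
  have h := X_pow_sub_C_eq_prod hζ hn (rfl : a ^ n = a ^ n)
  have h2 := congrArg (Polynomial.eval x) h
  simpa [Polynomial.eval_prod, mul_comm] using h2.symm

lemma prod_one_sub_pow' {n : ℕ} {ζ : ℂ} (hn : 0 < n) (hζ : IsPrimitiveRoot ζ n) :
    ∏ t ∈ Finset.Icc 1 (n-1), ((1:ℂ) - ζ ^ t) = n := by
  obtain ⟨m, rfl⟩ : ∃ m, n = m + 1 := ⟨n - 1, by omega⟩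
  have h := hζ.prod_one_sub_pow_eq_order
  rw [show Finset.Icc 1 (m + 1 - 1) = Finset.Ico 1 (m+1) by
      rw [Finset.Ico_add_one_right_eq_Icc, Nat.add_sub_cancel],
    Finset.prod_Ico_eq_prod_range]
  simpa [add_comm] using h

lemma sgnOne_eq (x : ℝ) : sgnOne x = 1 ∨ sgnOne x = -1 := by
  unfold sgnOne; split <;> simp

lemma sgnOne_pow_odd {x : ℝ} {n : ℕ} (hn : Odd n) : (sgnOne x) ^ n = sgnOne x := by
  rcases sgnOne_eq x with h | h <;> rw [h] <;> simp [hn.neg_one_pow]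

lemma sgnOne_sq (x : ℝ) : (sgnOne x) ^ 2 = 1 := by
  rcases sgnOne_eq x with h | h <;> rw [h] <;> ring

lemma sgnOne_mul_abs (x : ℝ) (hx : x ≠ 0) : sgnOne x * |x| = x := by
  unfold sgnOne; rcases lt_trichotomy x 0 with h | h | h
  · rw [if_pos h, abs_of_neg h]; ring
  · exact absurd h hx
  · rw [if_neg (by linarith), abs_of_pos h]; ring

noncomputable def phase (w : ℂ) : ℝ :=
  if w.re = 0 then Real.sign w.im * Real.pi / 2 else Real.arctan (w.im / w.re)

lemma polar_eq (w : ℂ) :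
    w = (sgnOne w.re : ℂ) * (‖w‖ : ℂ) * Complex.exp ((phase w : ℝ) * Complex.I) := by
  by_cases hw : w = 0
  · simp [hw]
  by_cases h : w.re = 0
  · have him : w.im ≠ 0 := fun h' => hw (Complex.ext h h')
    have habs : ‖w‖ = |w.im| := by
      rw [Complex.norm_def, Complex.normSq_apply, h]
      rw [show (0:ℝ) * 0 + w.im * w.im = w.im ^ 2 by ring, Real.sqrt_sq_eq_abs]
    rw [phase, if_pos h]
    apply Complex.ext
    · rw [h]
      rcases lt_trichotomy w.im 0 with hi | hi | hi
      · rw [Real.sign_of_neg hi]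
        simp only [Complex.mul_re, Complex.mul_im, Complex.ofReal_re, Complex.ofReal_im]
        rw [show ((-1:ℝ) * π / 2 : ℝ) = -(π/2) by ring]
        rw [show ((-(π/2) : ℝ) : ℂ) * Complex.I = ((-(π/2) : ℝ) : ℂ) * Complex.I from rfl,
          Complex.exp_ofReal_mul_I_re, Complex.exp_ofReal_mul_I_im, Real.cos_neg,
          Real.cos_pi_div_two]
        ring
      · exact absurd hi him
      · rw [Real.sign_of_pos hi]
        simp only [Complex.mul_re, Complex.mul_im, Complex.ofReal_re, Complex.ofReal_im]
        rw [show ((1:ℝ) * π / 2 : ℝ) = π/2 by ring, Complex.exp_ofReal_mul_I_re,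
          Complex.exp_ofReal_mul_I_im, Real.cos_pi_div_two]
        ring
    · rcases lt_trichotomy w.im 0 with hi | hi | hi
      · rw [Real.sign_of_neg hi]
        simp only [Complex.mul_im, Complex.mul_re, Complex.ofReal_re, Complex.ofReal_im,
          Complex.exp_ofReal_mul_I_re, Complex.exp_ofReal_mul_I_im]
        rw [habs, abs_of_neg hi, sgnOne, if_neg (by rw [h]; exact lt_irrefl 0)]
        rw [show (-1 : ℝ) * π / 2 = -(π/2) by ring, Real.sin_neg, Real.sin_pi_div_two]
        ring
      · exact absurd hi him
      · rw [Real.sign_of_pos hi]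
        simp only [Complex.mul_im, Complex.mul_re, Complex.ofReal_re, Complex.ofReal_im,
          Complex.exp_ofReal_mul_I_re, Complex.exp_ofReal_mul_I_im]
        rw [habs, abs_of_pos hi, sgnOne, if_neg (by rw [h]; exact lt_irrefl 0)]
        rw [show (1 : ℝ) * π / 2 = π/2 by ring, Real.sin_pi_div_two]
        ring
  · have habs : (‖w‖ : ℝ) = Real.sqrt (w.re ^ 2 + w.im ^ 2) := by
      rw [Complex.norm_def, Complex.normSq_apply]; ring_nf
    have hsq : Real.sqrt (1 + (w.im / w.re) ^ 2)
        = Real.sqrt (w.re ^ 2 + w.im ^ 2) / |w.re| := by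
      rw [show 1 + (w.im / w.re) ^ 2 = (w.re ^ 2 + w.im ^ 2) / w.re ^ 2 by field_simp,
        Real.sqrt_div (by positivity), Real.sqrt_sq_eq_abs]
    have hrpos : 0 < Real.sqrt (w.re ^ 2 + w.im ^ 2) := by
      apply Real.sqrt_pos.2; positivity
    rw [phase, if_neg h]
    apply Complex.ext
    · simp only [Complex.mul_re, Complex.mul_im, Complex.ofReal_re, Complex.ofReal_im,
        Complex.exp_ofReal_mul_I_re, Complex.exp_ofReal_mul_I_im]
      rw [Real.cos_arctan, hsq, habs]
      have hs := sgnOne_mul_abs w.re h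
      field_simp
      linear_combination (-√(w.re ^ 2 + w.im ^ 2)) * hs
    · simp only [Complex.mul_im, Complex.mul_re, Complex.ofReal_re, Complex.ofReal_im,
        Complex.exp_ofReal_mul_I_re, Complex.exp_ofReal_mul_I_im]
      rw [Real.sin_arctan, hsq, habs]
      have hs := sgnOne_mul_abs w.re h
      field_simp
      linear_combination (-(w.im * √(w.re ^ 2 + w.im ^ 2))) * hs

lemma normSq_sub_polar (a s rn θ : ℝ) :
    Complex.normSq ((a:ℂ) - (s:ℂ) * (rn:ℂ) * Complex.exp ((θ:ℝ) * Complex.I))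
      = a^2 - 2*a*s*rn*Real.cos θ + s^2 * rn^2 := by
  simp only [Complex.normSq_apply, Complex.sub_re, Complex.sub_im, Complex.mul_re, Complex.mul_im,
    Complex.exp_ofReal_mul_I_re, Complex.exp_ofReal_mul_I_im, Complex.ofReal_re, Complex.ofReal_im]
  linear_combination (s^2 * rn^2) * Real.sin_sq_add_cos_sq θ

lemma prod_split (β n : ℕ) (hβ : 0 < β) (hn : 0 < n) (f : ℕ → ℂ) :
    ∏ k ∈ Finset.Icc 1 (β*n - 1), f k
      = (∏ t ∈ Finset.Icc 1 (n-1), f (β*t)) *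
        ∏ j ∈ Finset.Icc 1 (β-1), ∏ t ∈ Finset.range n, f (j + β*t) := by
  classical
  have hmod : ∀ j t : ℕ, (j + β * t) % β = j % β := fun j t => Nat.add_mul_mod_self_left j β t
  have hset : Finset.Icc 1 (β*n - 1)
      = ((Finset.Icc 1 (n-1)).image (fun t => β * t)) ∪
        (((Finset.Icc 1 (β-1)) ×ˢ Finset.range n).image (fun q => q.1 + β * q.2)) := by
    ext k
    simp only [Finset.mem_union, Finset.mem_image, Finset.mem_Icc, Finset.mem_product,
      Finset.mem_range, Prod.exists]
    constructor
    · rintro ⟨h1, h2⟩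
      by_cases hdvd : β ∣ k
      · obtain ⟨t, rfl⟩ := hdvd
        left
        have ht1 : 1 ≤ t := by
          rcases Nat.eq_zero_or_pos t with h | h
          · subst h; simp at h1
          · exact h
        have ht2 : t ≤ n - 1 := by
          by_contra hc
          have : n ≤ t := by omega
          have : β * n ≤ β * t := Nat.mul_le_mul_left β this
          omega
        exact ⟨t, ⟨ht1, ht2⟩, rfl⟩
      · right
        refine ⟨k % β, k / β, ⟨⟨?_, ?_⟩, ?_⟩, by rw [Nat.mod_add_div]⟩
        · have hne : k % β ≠ 0 := fun h => hdvd (Nat.dvd_of_mod_eq_zero h)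
          omega
        · have := Nat.mod_lt k hβ
          omega
        · rw [Nat.div_lt_iff_lt_mul hβ]
          have hc : β * n = n * β := Nat.mul_comm β n
          omega
    · rintro (⟨t, ⟨ht1, ht2⟩, rfl⟩ | ⟨j, t, ⟨⟨hj1, hj2⟩, ht⟩, rfl⟩)
      · have hle : β * t ≤ β * (n-1) := Nat.mul_le_mul_left β ht2
        have h2 : β * (n - 1) = β * n - β := by
          rw [Nat.mul_sub, mul_one]
        have hge : 1 * 1 ≤ β * t := Nat.mul_le_mul hβ ht1
        have hβle : β ≤ β * n := Nat.le_mul_of_pos_right β hn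
        omega
      · have h1 : β * t ≤ β * (n-1) := Nat.mul_le_mul_left β (by omega)
        have h2 : β * (n - 1) = β * n - β := by
          rw [Nat.mul_sub, mul_one]
        have hβle : β ≤ β * n := Nat.le_mul_of_pos_right β hn
        omega
  have hdisj : Disjoint ((Finset.Icc 1 (n-1)).image (fun t => β * t))
      (((Finset.Icc 1 (β-1)) ×ˢ Finset.range n).image (fun q => q.1 + β * q.2)) := by
    rw [Finset.disjoint_left]
    rintro x hx1 hx2
    simp only [Finset.mem_image, Finset.mem_Icc, Finset.mem_product, Finset.mem_range,
      Prod.exists] at hx1 hx2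
    obtain ⟨t, _, rfl⟩ := hx1
    obtain ⟨j, t', ⟨⟨hj1, hj2⟩, _⟩, he⟩ := hx2
    have h1 : (j + β * t') % β = j % β := hmod j t'
    have h2 : (β * t) % β = 0 := Nat.mul_mod_right β t
    rw [← he, h1] at h2
    have := Nat.mod_eq_of_lt (show j < β by omega)
    omega
  rw [hset, Finset.prod_union hdisj]
  congr 1
  · rw [Finset.prod_image]
    intro x _ y _ h
    exact Nat.eq_of_mul_eq_mul_left hβ h
  · rw [Finset.prod_image, Finset.prod_product]
    rintro ⟨j, t⟩ hq ⟨j', t'⟩ hq' he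
    simp only [Finset.mem_coe, Finset.mem_product, Finset.mem_Icc, Finset.mem_range] at hq hq'
    simp only [] at he
    have h1 : (j + β * t) % β = j % β := hmod j t
    have h2 : (j' + β * t') % β = j' % β := hmod j' t'
    have hj : j % β = j := Nat.mod_eq_of_lt (by omega)
    have hj' : j' % β = j' := Nat.mod_eq_of_lt (by omega)
    have : j = j' := by rw [← hj, ← hj', ← h1, ← h2, he]
    subst this
    have : β * t = β * t' := by omega
    have := Nat.eq_of_mul_eq_mul_left hβ this
    simp [this]

lemma prod_pair (β : ℕ) (hβ : 1 ≤ β) (G : ℕ → ℂ) :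
    ∏ j ∈ Finset.Icc 1 (β-1), G j
      = (if Even β then G (β/2) else 1) *
        ∏ j ∈ Finset.Icc 1 ((β+1)/2 - 1), (G j * G (β - j)) := by
  have hicc : ∀ x : ℕ, Finset.Icc 1 x = Finset.Ioc 0 x := fun x => by
    rw [← Finset.Icc_add_one_left_eq_Ioc, zero_add]
  rcases Nat.even_or_odd β with ⟨b, hb⟩ | ⟨b, hb⟩
  · have hb1 : 1 ≤ b := by omega
    have hhalf : β / 2 = b := by omega
    have hh : (β+1)/2 - 1 = b - 1 := by omega
    have hβ1 : β - 1 = 2*b - 1 := by omega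
    rw [if_pos ⟨b, hb⟩, hhalf, hh, hβ1, hicc, hicc]
    have hsplit1 : (∏ j ∈ Finset.Ioc 0 (b-1), G j) * (∏ j ∈ Finset.Ioc (b-1) (2*b-1), G j)
        = ∏ j ∈ Finset.Ioc 0 (2*b-1), G j :=
      Finset.prod_Ioc_consecutive _ (by omega) (by omega)
    have hsplit2 : (∏ j ∈ Finset.Ioc (b-1) b, G j) * (∏ j ∈ Finset.Ioc b (2*b-1), G j)
        = ∏ j ∈ Finset.Ioc (b-1) (2*b-1), G j :=
      Finset.prod_Ioc_consecutive _ (by omega) (by omega)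
    have hsing : Finset.Ioc (b-1) b = {b} := by
      ext x
      simp only [Finset.mem_Ioc, Finset.mem_singleton]
      omega
    have hrefl : ∏ j ∈ Finset.Ioc b (2*b-1), G j = ∏ j ∈ Finset.Ioc 0 (b-1), G (β - j) := by
      apply Finset.prod_nbij' (fun j => 2*b - j) (fun j => 2*b - j)
      · intro a ha
        simp only [Finset.mem_Ioc] at ha ⊢
        omega
      · intro a ha
        simp only [Finset.mem_Ioc] at ha ⊢
        omega
      · intro a ha
        simp only [Finset.mem_Ioc] at ha
        omega
      · intro a ha
        simp only [Finset.mem_Ioc] at ha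
        omega
      · intro a ha
        simp only [Finset.mem_Ioc] at ha
        rw [hb]
        congr 1
        omega
    rw [← hsplit1, ← hsplit2, hsing, Finset.prod_singleton, hrefl, Finset.prod_mul_distrib]
    ring
  · have hh : (β+1)/2 - 1 = b := by omega
    have hβ1 : β - 1 = 2*b := by omega
    rw [if_neg (by simp [hb, parity_simps]), hh, hβ1, hicc, hicc]
    have hsplit1 : (∏ j ∈ Finset.Ioc 0 b, G j) * (∏ j ∈ Finset.Ioc b (2*b), G j)
        = ∏ j ∈ Finset.Ioc 0 (2*b), G j :=
      Finset.prod_Ioc_consecutive _ (by omega) (by omega)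
    have hrefl : ∏ j ∈ Finset.Ioc b (2*b), G j = ∏ j ∈ Finset.Ioc 0 b, G (β - j) := by
      apply Finset.prod_nbij' (fun j => 2*b+1 - j) (fun j => 2*b+1 - j)
      · intro a ha
        simp only [Finset.mem_Ioc] at ha ⊢
        omega
      · intro a ha
        simp only [Finset.mem_Ioc] at ha ⊢
        omega
      · intro a ha
        simp only [Finset.mem_Ioc] at ha
        omega
      · intro a ha
        simp only [Finset.mem_Ioc] at ha
        omega
      · intro a ha
        simp only [Finset.mem_Ioc] at ha
        rw [hb]
        congr 1
        omega
    rw [← hsplit1, hrefl, Finset.prod_mul_distrib]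
    ring

/-- `1 + ∑ e^{2πiγ_m k/β}`, i.e. `d - μ_k`. -/
noncomputable def ccf (d β : ℕ) (γ : ℕ → ℕ) (k : ℕ) : ℂ :=
  1 + ∑ m ∈ Finset.Icc 1 (d - 1), Complex.exp (2 * Real.pi * Complex.I * (γ m) * k / β)

lemma cc_re (d β : ℕ) (γ : ℕ → ℕ) (k : ℕ) :
    (ccf d β γ k).re = (d:ℝ) - undirEig d β γ k / 2 := by
  have ht : ∀ g : ℕ, Complex.exp (2 * (Real.pi:ℂ) * Complex.I * (g:ℂ) * k / β)
      = Complex.exp (((2 * Real.pi * g * k / β : ℝ) : ℂ) * Complex.I) := by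
    intro g; congr 1; push_cast; ring
  rw [ccf, undirEig]
  rw [Finset.sum_congr rfl (fun m _ => ht (γ m))]
  rw [Complex.add_re, Complex.re_sum, Complex.one_re]
  simp only [Complex.exp_ofReal_mul_I_re]
  ring

lemma cc_im (d β : ℕ) (γ : ℕ → ℕ) (k : ℕ) :
    (ccf d β γ k).im = ∑ m ∈ Finset.Icc 1 (d - 1), Real.sin (2 * Real.pi * (γ m) * k / β) := by
  have ht : ∀ g : ℕ, Complex.exp (2 * (Real.pi:ℂ) * Complex.I * (g:ℂ) * k / β)
      = Complex.exp (((2 * Real.pi * g * k / β : ℝ) : ℂ) * Complex.I) := by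
    intro g; congr 1; push_cast; ring
  rw [ccf]
  rw [Finset.sum_congr rfl (fun m _ => ht (γ m))]
  rw [Complex.add_im, Complex.im_sum, Complex.one_im]
  simp only [Complex.exp_ofReal_mul_I_im]
  ring

lemma cc_phase (d β : ℕ) (γ : ℕ → ℕ) (k : ℕ) :
    eigPhase d β γ k = phase (ccf d β γ k) := by
  rw [eigPhase, phase, cc_re, cc_im]

lemma cc_sgn (d β : ℕ) (γ : ℕ → ℕ) (k : ℕ) :
    sgnOne ((d:ℝ) - undirEig d β γ k / 2) = sgnOne ((ccf d β γ k).re) := by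
  rw [cc_re]

lemma cc_abs (d β : ℕ) (γ : ℕ → ℕ) (k : ℕ) (hd : (d:ℂ) ≠ 0) :
    ‖1 - dirEig d β γ k / d‖ = ‖ccf d β γ k‖ / d := by
  have h : (1 : ℂ) - dirEig d β γ k / d = ccf d β γ k / d := by
    rw [dirEig, ccf]
    rw [eq_div_iff hd, sub_mul, div_mul_cancel₀ _ hd]
    ring
  rw [h, norm_div, Complex.norm_natCast]

lemma cc_periodic (d β : ℕ) (γ : ℕ → ℕ) (j t : ℕ) (hβ : 0 < β) :
    ccf d β γ (j + β * t) = ccf d β γ j := by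
  rw [ccf, ccf]
  congr 1
  apply Finset.sum_congr rfl
  intro m _
  rw [show 2 * (Real.pi:ℂ) * Complex.I * (γ m) * (j + β * t : ℕ) / β
      = 2 * (Real.pi:ℂ) * Complex.I * (γ m) * j / β + (γ m * t : ℕ) * (2 * Real.pi * Complex.I) by
    push_cast
    have : (β:ℂ) ≠ 0 := Nat.cast_ne_zero.2 hβ.ne'
    field_simp]
  rw [Complex.exp_add, Complex.exp_nat_mul_two_pi_mul_I, mul_one]

lemma cc_conj (d β : ℕ) (γ : ℕ → ℕ) (j : ℕ) (hβ : 0 < β) (hj : j ≤ β) :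
    (starRingEnd ℂ) (ccf d β γ j) = ccf d β γ (β - j) := by
  rw [ccf, ccf, map_add, map_one, map_sum]
  congr 1
  apply Finset.sum_congr rfl
  intro m _
  rw [← Complex.exp_conj]
  rw [show (starRingEnd ℂ) (2 * (Real.pi:ℂ) * Complex.I * (γ m) * j / β)
      = -(2 * (Real.pi:ℂ) * Complex.I * (γ m) * j / β) by
    simp [map_div₀, Complex.conj_I, map_ofNat]
    ring]
  rw [show 2 * (Real.pi:ℂ) * Complex.I * (γ m) * ((β - j : ℕ):ℂ) / β
      = -(2 * (Real.pi:ℂ) * Complex.I * (γ m) * j / β) + (γ m : ℕ) * (2 * Real.pi * Complex.I) by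
    push_cast [Nat.cast_sub hj]
    have : (β:ℂ) ≠ 0 := Nat.cast_ne_zero.2 hβ.ne'
    field_simp
    ring]
  rw [Complex.exp_add, Complex.exp_nat_mul_two_pi_mul_I, mul_one]

lemma cc_zero (d β : ℕ) (γ : ℕ → ℕ) (hd : 1 ≤ d) :
    ccf d β γ 0 = (d : ℂ) := by
  rw [ccf]
  have : ∀ m ∈ Finset.Icc 1 (d-1), Complex.exp (2 * (Real.pi:ℂ) * Complex.I * (γ m) * (0:ℕ) / β)
      = 1 := by
    intro m _
    rw [show 2 * (Real.pi:ℂ) * Complex.I * (γ m) * ((0:ℕ):ℂ) / β = 0 by push_cast; ring,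
      Complex.exp_zero]
  rw [Finset.sum_congr rfl this, Finset.sum_const, Nat.card_Icc, nsmul_eq_mul, mul_one,
    show d - 1 + 1 - 1 = d - 1 by omega, Nat.cast_sub hd]
  push_cast
  ring

lemma cc_half (d β : ℕ) (γ : ℕ → ℕ) (b : ℕ) (hb : β = b + b) (hb1 : 1 ≤ b) :
    ccf d β γ (β / 2) = 1 + ∑ m ∈ Finset.Icc 1 (d - 1), (-1 : ℂ) ^ (γ m) := by
  have hhalf : β / 2 = b := by omega
  rw [ccf, hhalf]
  congr 1
  apply Finset.sum_congr rfl
  intro m _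
  rw [show 2 * (Real.pi:ℂ) * Complex.I * (γ m) * (b:ℕ) / β
      = (γ m : ℕ) * ((Real.pi:ℂ) * Complex.I) by
    subst hb
    push_cast
    have h0 : (b:ℂ) ≠ 0 := Nat.cast_ne_zero.2 (by omega)
    have hbne : ((b:ℂ) + (b:ℂ)) ≠ 0 := by
      rw [show ((b:ℂ) + b) = 2 * b by ring]
      exact mul_ne_zero two_ne_zero h0
    rw [div_eq_iff hbne]
    ring]
  rw [Complex.exp_nat_mul, Complex.exp_pi_mul_I]

lemma exp_half (p β b : ℕ) (hb : β = b + b) (hb1 : 1 ≤ b) :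
    Complex.exp (2 * Real.pi * Complex.I * (p:ℂ) * ((β / 2 : ℕ):ℂ) / (β:ℂ)) = (-1) ^ p := by
  have hhalf : β / 2 = b := by omega
  rw [hhalf]
  rw [show 2 * (Real.pi:ℂ) * Complex.I * (p:ℂ) * ((b:ℕ):ℂ) / β
      = (p : ℕ) * ((Real.pi:ℂ) * Complex.I) by
    subst hb
    push_cast
    have h0 : (b:ℂ) ≠ 0 := Nat.cast_ne_zero.2 (by omega)
    have hbne : ((b:ℂ) + (b:ℂ)) ≠ 0 := by
      rw [show ((b:ℂ) + b) = 2 * b by ring]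
      exact mul_ne_zero two_ne_zero h0
    rw [div_eq_iff hbne]
    ring]
  rw [Complex.exp_nat_mul, Complex.exp_pi_mul_I]


/-- The number of spanning trees of the directed circulant graph on `βn` vertices with
generators `p, γ_1 n + p, …, γ_{d-1} n + p`, for `gcd(p,n) = 1` and odd `n`, as a product
of `⌈β/2⌉ − 1` explicit factors. -/
theorem stmt_1 (d β p n : ℕ) (γ : ℕ → ℕ) (hd : 2 ≤ d)
    (hγ1 : ∀ m ∈ Finset.Icc 1 (d - 1), 1 ≤ γ m)
    (hγmono : ∀ m ∈ Finset.Icc 1 (d - 1), ∀ m' ∈ Finset.Icc 1 (d - 1), m ≤ m' → γ m ≤ γ m')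
    (hγβ : ∀ m ∈ Finset.Icc 1 (d - 1), γ m ≤ β)
    (hβ : 1 ≤ β) (hp : 1 ≤ p) (hn : 1 ≤ n) (hpn : Nat.gcd p n = 1) (hno : Odd n) :
    ∏ k ∈ Finset.Icc 1 (β * n - 1),
        ((d : ℂ) - Complex.exp (2 * Real.pi * Complex.I * p * k / (β * n))
          - ∑ m ∈ Finset.Icc 1 (d - 1),
              Complex.exp (2 * Real.pi * Complex.I * (γ m * n + p) * k / (β * n)))
      = (n : ℂ) * (d : ℂ) ^ (β * n - 1)
        * (1 - (if Even β then (1 : ℂ) else 0) * (-1) ^ p / (d : ℂ) ^ n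
            * (1 + ∑ m ∈ Finset.Icc 1 (d - 1), (-1 : ℂ) ^ (γ m)) ^ n)
        * ∏ k ∈ Finset.Icc 1 ((β + 1) / 2 - 1),
            (((1 : ℝ)
                - 2 * sgnOne ((d : ℝ) - undirEig d β γ k / 2)
                    * ‖1 - dirEig d β γ k / d‖ ^ n
                    * Real.cos (2 * Real.pi * p * k / β + n * eigPhase d β γ k)
                + ‖1 - dirEig d β γ k / d‖ ^ (2 * n) : ℝ) : ℂ) := by
  have hβpos : 0 < β := hβ
  have hnpos : 0 < n := hn
  have hd1 : 1 ≤ d := by omega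
  have hdC : (d:ℂ) ≠ 0 := Nat.cast_ne_zero.2 (by omega)
  have hβC : (β:ℂ) ≠ 0 := Nat.cast_ne_zero.2 (by omega)
  have hnC : (n:ℂ) ≠ 0 := Nat.cast_ne_zero.2 (by omega)
  have hdR : (0:ℝ) < (d:ℝ) := by exact_mod_cast (by omega : 0 < d)
  have hζp : IsPrimitiveRoot (Complex.exp (2 * Real.pi * Complex.I * ((p:ℂ) / (n:ℂ)))) n :=
    Complex.isPrimitiveRoot_exp_of_coprime p n (by omega) hpn
  set ζ : ℂ := Complex.exp (2 * Real.pi * Complex.I * ((p:ℂ) / (n:ℂ))) with hζdef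
  set f : ℕ → ℂ := fun k =>
    (d:ℂ) - Complex.exp (2 * Real.pi * Complex.I * p * k / (β * n)) * ccf d β γ k with hfdef
  set G : ℕ → ℂ := fun j =>
    (d:ℂ)^n - Complex.exp (2 * Real.pi * Complex.I * p * j / β) * (ccf d β γ j)^n with hGdef
  -- Step 1: rewrite each factor
  have hfac : ∀ k : ℕ, ((d : ℂ) - Complex.exp (2 * Real.pi * Complex.I * p * k / (β * n))
          - ∑ m ∈ Finset.Icc 1 (d - 1),
              Complex.exp (2 * Real.pi * Complex.I * (γ m * n + p) * k / (β * n)))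
      = f k := by
    intro k
    rw [hfdef]
    simp only []
    have hsum : ∀ m ∈ Finset.Icc 1 (d-1),
        Complex.exp (2 * Real.pi * Complex.I * ((γ m : ℂ) * n + p) * k / ((β:ℂ) * n))
        = Complex.exp (2 * Real.pi * Complex.I * (p:ℂ) * k / ((β:ℂ) * n))
          * Complex.exp (2 * Real.pi * Complex.I * (γ m : ℂ) * k / (β:ℂ)) := by
      intro m _
      rw [← Complex.exp_add]
      congr 1
      field_simp
      ring
    rw [Finset.sum_congr rfl hsum, ccf, mul_add, mul_one, Finset.mul_sum]
    ring
  rw [Finset.prod_congr rfl (fun k _ => hfac k), prod_split β n hβpos hnpos f]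
  -- Step 2: the multiples-of-β block
  have hT : ∏ t ∈ Finset.Icc 1 (n-1), f (β*t) = (n:ℂ) * (d:ℂ)^(n-1) := by
    have hft : ∀ t ∈ Finset.Icc 1 (n-1), f (β*t) = (d:ℂ) * (1 - ζ^t) := by
      intro t _
      rw [hfdef]
      simp only []
      rw [show β * t = 0 + β * t by ring]
      rw [cc_periodic d β γ 0 t hβpos, cc_zero d β γ hd1]
      rw [show Complex.exp (2 * Real.pi * Complex.I * (p:ℂ) * (((0 + β*t : ℕ)):ℂ) / ((β:ℂ) * n))
          = ζ^t by
        rw [hζdef, ← Complex.exp_nat_mul]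
        congr 1
        push_cast
        field_simp
        ring]
      ring
    rw [Finset.prod_congr rfl hft, Finset.prod_mul_distrib, Finset.prod_const, Nat.card_Icc,
      prod_one_sub_pow' hnpos hζp, show n - 1 + 1 - 1 = n - 1 by omega]
    ring
  -- Step 3: each nonzero residue block
  have hJ : ∀ j ∈ Finset.Icc 1 (β-1), ∏ t ∈ Finset.range n, f (j + β*t) = G j := by
    intro j _
    have hft : ∀ t ∈ Finset.range n, f (j + β*t)
        = (d:ℂ) - (Complex.exp (2 * Real.pi * Complex.I * (p:ℂ) * (j:ℂ) / ((β:ℂ) * n))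
            * ccf d β γ j) * ζ^t := by
      intro t _
      rw [hfdef]
      simp only []
      rw [cc_periodic d β γ j t hβpos]
      rw [show Complex.exp (2 * Real.pi * Complex.I * (p:ℂ) * (((j + β*t : ℕ)):ℂ) / ((β:ℂ) * n))
          = Complex.exp (2 * Real.pi * Complex.I * (p:ℂ) * (j:ℂ) / ((β:ℂ) * n)) * ζ^t by
        rw [hζdef, ← Complex.exp_nat_mul, ← Complex.exp_add]
        congr 1
        push_cast
        field_simp]
      ring
    rw [Finset.prod_congr rfl hft, prod_x_sub_mul hnpos hζp, mul_pow]
    rw [← Complex.exp_nat_mul]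
    rw [hGdef]
    simp only []
    rw [show (n:ℂ) * (2 * Real.pi * Complex.I * (p:ℂ) * (j:ℂ) / ((β:ℂ) * n))
        = 2 * Real.pi * Complex.I * (p:ℂ) * (j:ℂ) / (β:ℂ) by field_simp]
  rw [Finset.prod_congr rfl hJ, hT, prod_pair β hβ G]
  -- Step 4: pair values
  have hpair : ∀ j ∈ Finset.Icc 1 ((β+1)/2 - 1), G j * G (β - j)
      = (d:ℂ)^(2*n) * ((((1 : ℝ)
                - 2 * sgnOne ((d : ℝ) - undirEig d β γ j / 2)
                    * ‖1 - dirEig d β γ j / d‖ ^ n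
                    * Real.cos (2 * Real.pi * p * j / β + n * eigPhase d β γ j)
                + ‖1 - dirEig d β γ j / d‖ ^ (2 * n) : ℝ)) : ℂ) := by
    intro j hj
    simp only [Finset.mem_Icc] at hj
    have hjβ : j ≤ β := by omega
    have hEconj : (starRingEnd ℂ) (Complex.exp (2 * Real.pi * Complex.I * (p:ℂ) * (j:ℂ) / β))
        = Complex.exp (2 * Real.pi * Complex.I * (p:ℂ) * ((β - j : ℕ):ℂ) / β) := by
      rw [← Complex.exp_conj]
      rw [show (starRingEnd ℂ) (2 * Real.pi * Complex.I * (p:ℂ) * (j:ℂ) / (β:ℂ))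
          = -(2 * Real.pi * Complex.I * (p:ℂ) * (j:ℂ) / (β:ℂ)) by
        simp [map_div₀, Complex.conj_I, map_ofNat]
        ring]
      rw [show 2 * (Real.pi:ℂ) * Complex.I * (p:ℂ) * ((β - j:ℕ):ℂ) / (β:ℂ)
          = -(2 * Real.pi * Complex.I * (p:ℂ) * (j:ℂ) / (β:ℂ)) + (p:ℕ) * (2 * Real.pi * Complex.I) by
        push_cast [Nat.cast_sub hjβ]
        field_simp
        ring]
      rw [Complex.exp_add, Complex.exp_nat_mul_two_pi_mul_I, mul_one]
    have hGconj : G (β - j) = (starRingEnd ℂ) (G j) := by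
      rw [hGdef]
      simp only []
      rw [map_sub, map_pow, Complex.conj_natCast, map_mul, map_pow,
        cc_conj d β γ j hβpos hjβ, hEconj]
    rw [hGconj, Complex.mul_conj]
    -- now a real computation
    set w := ccf d β γ j with hw
    set s := sgnOne w.re with hs
    set r := ‖w‖ with hr
    set α : ℝ := 2 * Real.pi * p * j / β with hα
    set φ := phase w with hφ
    have hE : Complex.exp (2 * Real.pi * Complex.I * (p:ℂ) * (j:ℂ) / (β:ℂ))
        = Complex.exp ((α:ℝ) * Complex.I) := by
      congr 1
      rw [hα]
      push_cast
      ring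
    have hzz : Complex.exp ((α:ℝ) * Complex.I) * w^n
        = (s:ℂ) * ((r^n : ℝ):ℂ) * Complex.exp (((α + n*φ : ℝ)) * Complex.I) := by
      conv_lhs => rw [polar_eq w]
      rw [mul_pow, mul_pow, ← Complex.exp_nat_mul,
        show ((n:ℂ) * ((phase w : ℝ) * Complex.I)) = ((n * phase w : ℝ):ℂ) * Complex.I by
          push_cast; ring,
        show ((sgnOne w.re : ℝ):ℂ)^n = ((s : ℝ):ℂ) by
          rw [← Complex.ofReal_pow, sgnOne_pow_odd hno, hs],
        show ((α + n*φ : ℝ):ℂ) * Complex.I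
            = ((α:ℝ):ℂ) * Complex.I + ((n * phase w : ℝ):ℂ) * Complex.I by
          rw [hφ]; push_cast; ring,
        Complex.exp_add, Complex.ofReal_pow]
      ring
    have hG : G j = (((d:ℝ)^n : ℝ):ℂ) - ((s:ℝ):ℂ) * ((r^n : ℝ):ℂ)
        * Complex.exp (((α + n*φ : ℝ)) * Complex.I) := by
      rw [hGdef]
      simp only []
      rw [hE, ← hw, hzz]
      push_cast
      ring
    have hkey : Complex.normSq (G j)
        = (d:ℝ)^(2*n) * ((1:ℝ) - 2*s*(r/d)^n * Real.cos (α + n*φ) + (r/d)^(2*n)) := by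
      rw [hG, normSq_sub_polar]
      have hs2 : s^2 = 1 := by rw [hs]; exact sgnOne_sq w.re
      rw [hs2, one_mul, div_pow, div_pow]
      have hdn : ((d:ℝ))^n ≠ 0 := by positivity
      have hdn2 : ((d:ℝ))^(2*n) ≠ 0 := by positivity
      field_simp
      ring
    have habs' : ‖1 - dirEig d β γ j / (d:ℂ)‖ = r / d := by
      rw [cc_abs d β γ j hdC, hr, hw]
    have hphase' : eigPhase d β γ j = φ := by rw [hφ, hw]; exact cc_phase d β γ j
    have hsgn' : sgnOne ((d : ℝ) - undirEig d β γ j / 2) = s := by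
      rw [hs, hw]; exact cc_sgn d β γ j
    rw [hkey, habs', hphase', hsgn']
    push_cast
    ring
  rw [Finset.prod_congr rfl hpair, Finset.prod_mul_distrib, Finset.prod_const, Nat.card_Icc,
    show (β + 1) / 2 - 1 + 1 - 1 = (β + 1) / 2 - 1 by omega]
  -- Step 5: assembly
  rcases Nat.even_or_odd β with heven | hodd
  · obtain ⟨b, hb⟩ := heven
    have hb1 : 1 ≤ b := by omega
    have hGmid : G (β / 2) = (d:ℂ)^n * (1 - (1 : ℂ) * (-1) ^ p / (d : ℂ) ^ n
        * (1 + ∑ m ∈ Finset.Icc 1 (d - 1), (-1 : ℂ) ^ (γ m)) ^ n) := by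
      rw [hGdef]
      simp only []
      rw [cc_half d β γ b hb hb1, exp_half p β b hb hb1]
      field_simp
    rw [if_pos ⟨b, hb⟩, if_pos ⟨b, hb⟩, hGmid]
    have hpow : (d:ℂ)^(β*n-1) = (d:ℂ)^(n-1) * (d:ℂ)^n * ((d:ℂ)^(2*n))^((β+1)/2-1) := by
      rw [← pow_mul, ← pow_add, ← pow_add]
      congr 1
      obtain ⟨n', rfl⟩ : ∃ n', n = n' + 1 := ⟨n - 1, by omega⟩
      obtain ⟨b', rfl⟩ : ∃ b', b = b' + 1 := ⟨b - 1, by omega⟩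
      subst hb
      simp only [Nat.add_sub_cancel]
      rw [show (b' + 1 + (b' + 1) + 1) / 2 - 1 = b' by omega]
      rw [show (b' + 1 + (b' + 1)) * (n' + 1) = (n' + (n' + 1) + 2 * (n' + 1) * b') + 1 by ring,
        Nat.add_sub_cancel]
    rw [hpow]
    ring
  · rw [if_neg (by simp [Nat.not_even_iff_odd.2 hodd]), if_neg (by simp [Nat.not_even_iff_odd.2 hodd])]
    obtain ⟨b, hb⟩ := hodd
    have hpow : (d:ℂ)^(β*n-1) = (d:ℂ)^(n-1) * ((d:ℂ)^(2*n))^((β+1)/2-1) := by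
      rw [← pow_mul, ← pow_add]
      congr 1
      obtain ⟨n', rfl⟩ : ∃ n', n = n' + 1 := ⟨n - 1, by omega⟩
      subst hb
      simp only [Nat.add_sub_cancel]
      rw [show (2 * b + 1 + 1) / 2 - 1 = b by omega]
      rw [show (2 * b + 1) * (n' + 1) = (n' + 2 * (n' + 1) * b) + 1 by ring,
        Nat.add_sub_cancel]
    rw [hpow]
    ring
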